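/- The point spectrum of the transition operator S acting on the space c of convergent complex sequences equals the point spectrum of S acting on c_0 together with the point {1}; that is, σ_p(S on c) = σ_p(S on c_0) ∪ {1}. In particular, σ_p(S on c) = {1} if and only if the sequence (p_n) does not converge to 1. -/

import Mathlib

open Filter Finset
open scoped ENNReal Topology ZeroAtInfty

noncomputable section

namespace AMFC

/-- `q d j = d 0 * d 1 * ... * d j`. -/
def q (d : ℕ → ℕ) (j : ℕ) : ℕ := ∏ i ∈ Finset.range (j + 1), d i

/-- For `j ≥ 1`, `digit d n j = ⌊n / q_{j-1}⌋ mod d_j` is the `j`-th digit of `n`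
in the Cantor system of numeration. -/
def digit (d : ℕ → ℕ) (n j : ℕ) : ℕ := (n / q d (j - 1)) % d j

/-- The counter `ζ_n = min { j ≥ 1 : a_j(n) ≠ d_j - 1 }`. -/
def zeta (d : ℕ → ℕ) (n : ℕ) : ℕ := sInf {j | 1 ≤ j ∧ digit d n j ≠ d j - 1}

open scoped Classical in
/-- The transition probabilities of the stochastic adding machine. -/
def s (d : ℕ → ℕ) (p : ℕ → ℝ) (n m : ℕ) : ℝ :=
  if m = n + 1 then ∏ j ∈ Finset.Icc 1 (zeta d n), p j
  else if m = n then 1 - p 1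
  else if h : ∃ r, 1 ≤ r ∧ r + 1 ≤ zeta d n ∧
      n = m + ∑ j ∈ Finset.Icc 1 r, (d j - 1) * q d (j - 1)
    then (1 - p (h.choose + 1)) * ∏ j ∈ Finset.Icc 1 h.choose, p j
  else 0

/-- `f j (z) = ((z - (1 - p j)) / p j) ^ (d j)`. -/
def f (d : ℕ → ℕ) (p : ℕ → ℝ) (j : ℕ) (z : ℂ) : ℂ :=
  ((z - (1 - (p j : ℂ))) / (p j : ℂ)) ^ d j

/-- `ftil j = f j ∘ ... ∘ f 1`, with `ftil 0 = id`. -/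
def ftil (d : ℕ → ℕ) (p : ℕ → ℝ) : ℕ → ℂ → ℂ
  | 0 => id
  | j + 1 => f d p (j + 1) ∘ ftil d p j

/-- The fibered filled Julia set `E = {z : limsup_j |ftil j z| < ∞}`. -/
def E (d : ℕ → ℕ) (p : ℕ → ℝ) : Set ℂ :=
  {z | Filter.limsup (fun j => (‖ftil d p j z‖₊ : ℝ≥0∞)) Filter.atTop < ⊤}

/-- `ι_λ(r) = (ftil (r-1) λ - (1 - p r)) / p r` for `r ≥ 1`. -/
def iota (d : ℕ → ℕ) (p : ℕ → ℝ) (lam : ℂ) (r : ℕ) : ℂ :=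
  (ftil d p (r - 1) lam - (1 - (p r : ℂ))) / (p r : ℂ)

/-- `v_λ(n) = ∏_{r ≥ 1} ι_λ(r) ^ a_r(n)`, a finite product. -/
def vlam (d : ℕ → ℕ) (p : ℕ → ℝ) (lam : ℂ) (n : ℕ) : ℂ :=
  ∏ᶠ r : ℕ, iota d p lam (r + 1) ^ digit d n (r + 1)

/-- The point spectrum of a continuous linear operator. -/
def pointSpectrum {M : Type*} [NormedAddCommGroup M] [NormedSpace ℂ M]
    (T : M →L[ℂ] M) : Set ℂ :=
  {lam | ∃ v, v ≠ 0 ∧ T v = lam • v}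

/-- The residual spectrum: `T - λI` is injective but its range is not dense. -/
def residualSpectrum {M : Type*} [NormedAddCommGroup M] [NormedSpace ℂ M]
    (T : M →L[ℂ] M) : Set ℂ :=
  {lam | Function.Injective ⇑(T - lam • (1 : M →L[ℂ] M)) ∧
    ¬ DenseRange ⇑(T - lam • (1 : M →L[ℂ] M))}

/-- The continuous spectrum: `T - λI` is injective with dense range, but not surjective. -/
def continuousSpectrum {M : Type*} [NormedAddCommGroup M] [NormedSpace ℂ M]
    (T : M →L[ℂ] M) : Set ℂ :=
  {lam | Function.Injective ⇑(T - lam • (1 : M →L[ℂ] M)) ∧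
    DenseRange ⇑(T - lam • (1 : M →L[ℂ] M)) ∧
    Set.range ⇑(T - lam • (1 : M →L[ℂ] M)) ≠ Set.univ}

set_option linter.unusedVariables false
set_option maxHeartbeats 1000000

section
section Aux
variable {d : ℕ → ℕ} {p : ℕ → ℝ}

lemma one_le_d (hd0 : d 0 = 1) (hd : ∀ j, 1 ≤ j → 2 ≤ d j) (i : ℕ) : 1 ≤ d i := by
  cases i with
  | zero => omega
  | succ k => have := hd (k+1) (by omega); omega

lemma q_succ (d : ℕ → ℕ) (j : ℕ) : q d (j+1) = q d j * d (j+1) := Finset.prod_range_succ _ _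

lemma q_zero (hd0 : d 0 = 1) : q d 0 = 1 := by simp [q, hd0]

lemma q_pos (hd0 : d 0 = 1) (hd : ∀ j, 1 ≤ j → 2 ≤ d j) (j : ℕ) : 0 < q d j :=
  Finset.prod_pos (fun i _ => one_le_d hd0 hd i)

lemma lt_q (hd0 : d 0 = 1) (hd : ∀ j, 1 ≤ j → 2 ≤ d j) (j : ℕ) : j < q d j := by
  induction j with
  | zero => rw [q_zero hd0]; omega
  | succ k ih =>
      rw [q_succ]
      have h2 : 2 ≤ d (k+1) := hd _ (by omega)
      have : q d k * 2 ≤ q d k * d (k+1) := Nat.mul_le_mul_left _ h2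
      omega

lemma q_mono (hd0 : d 0 = 1) (hd : ∀ j, 1 ≤ j → 2 ≤ d j) : StrictMono (q d) := by
  apply strictMono_nat_of_lt_succ
  intro j
  rw [q_succ]
  have h2 : 2 ≤ d (j+1) := hd _ (by omega)
  have h1 : 0 < q d j := q_pos hd0 hd j
  have : q d j * 2 ≤ q d j * d (j+1) := Nat.mul_le_mul_left _ h2
  omega

lemma q_dvd {i j : ℕ} (h : i ≤ j) : q d i ∣ q d j :=
  Finset.prod_dvd_prod_of_subset _ _ _ (Finset.range_subset_range.2 (by omega))

lemma q_pred_mul (hd0 : d 0 = 1) {j : ℕ} (hj : 1 ≤ j) : q d j = q d (j-1) * d j := by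
  obtain ⟨k, hk⟩ := Nat.exists_eq_add_of_le hj
  subst hk
  rw [Nat.add_comm 1 k]
  simpa using q_succ d k

lemma q_div_dvd (hd0 : d 0 = 1) {j z : ℕ} (h1 : 1 ≤ j) (hjz : j ≤ z) :
    q d (j-1) * d j ∣ q d z := by
  rw [← q_pred_mul hd0 h1]; exact q_dvd hjz

lemma sum_dq (hd0 : d 0 = 1) (hd : ∀ j, 1 ≤ j → 2 ≤ d j) (r : ℕ) :
    ∑ j ∈ Icc 1 r, (d j - 1) * q d (j-1) = q d r - 1 := by
  induction r with
  | zero => simp [q_zero hd0]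
  | succ k ih =>
      rw [Finset.sum_Icc_succ_top (by omega), ih, q_succ]
      simp only [Nat.add_sub_cancel]
      have h1 : 1 ≤ q d k := q_pos hd0 hd k
      have h2 : 2 ≤ d (k+1) := hd _ (by omega)
      have e : (d (k+1) - 1) * q d k = d (k+1) * q d k - q d k := by
        rw [Nat.sub_mul, one_mul]
      have e2 : q d k * d (k+1) = d (k+1) * q d k := Nat.mul_comm _ _
      have h3 : q d k ≤ d (k+1) * q d k := Nat.le_mul_of_pos_left _ (by omega)
      omega

lemma mod_mul' (m a b : ℕ) : m % (a * b) = a * (m / a % b) + m % a := by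
  conv_lhs => rw [← Nat.div_add_mod (m % (a*b)) a]
  rw [Nat.mod_mod_of_dvd _ ⟨b, rfl⟩, Nat.mod_mul_right_div_self]

lemma digit_lt (hd0 : d 0 = 1) (hd : ∀ j, 1 ≤ j → 2 ≤ d j) (n j : ℕ) :
    digit d n j < d j := Nat.mod_lt _ (one_le_d hd0 hd j)

lemma digit_of_lt {n j : ℕ} (h : n < q d (j-1)) : digit d n j = 0 := by
  unfold digit; rw [Nat.div_eq_of_lt h]; simp

lemma digit_zero_left (j : ℕ) : digit d 0 j = 0 := by simp [digit]

lemma digit_add_mul (hd0 : d 0 = 1) (hd : ∀ j, 1 ≤ j → 2 ≤ d j)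
    (X t : ℕ) {j z : ℕ} (hj : 1 ≤ j) (hjz : j ≤ z) :
    digit d (X * q d z + t) j = digit d t j := by
  obtain ⟨u, hu⟩ := q_div_dvd hd0 hj hjz
  have hq : 0 < q d (j-1) := q_pos hd0 hd _
  unfold digit
  have e1 : X * q d z + t = t + (X * (d j * u)) * q d (j-1) := by
    rw [hu]; ring
  rw [e1, Nat.add_mul_div_right _ _ hq]
  have e2 : X * (d j * u) = d j * (X * u) := by ring
  rw [e2, ← Nat.add_mul_mod_self_left (t / q d (j-1)) (d j) (X * u)]

lemma digit_div_eq (hd0 : d 0 = 1) (hd : ∀ j, 1 ≤ j → 2 ≤ d j)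
    {n n' z j : ℕ} (h : n / q d z = n' / q d z) (hj : z + 1 ≤ j) :
    digit d n j = digit d n' j := by
  obtain ⟨k, hk⟩ := q_dvd (show z ≤ j - 1 by omega) (d := d)
  unfold digit
  rw [hk, ← Nat.div_div_eq_div_mul, ← Nat.div_div_eq_div_mul, h]

lemma digit_of_dvd (hd0 : d 0 = 1) (hd : ∀ j, 1 ≤ j → 2 ≤ d j)
    {t r j : ℕ} (hj : 1 ≤ j) (hjr : j ≤ r) (h : q d r ∣ t) : digit d t j = 0 := by
  obtain ⟨X, hX⟩ := h
  have : t = X * q d r + 0 := by rw [hX]; ring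
  rw [this, digit_add_mul hd0 hd X 0 hj hjr, digit_zero_left]

lemma digit_add_pred (hd0 : d 0 = 1) (hd : ∀ j, 1 ≤ j → 2 ≤ d j)
    {t r j : ℕ} (h : q d r ∣ t) (hj : r + 1 ≤ j) :
    digit d (t + (q d r - 1)) j = digit d t j := by
  obtain ⟨X, hX⟩ := h
  have hq : 0 < q d r := q_pos hd0 hd r
  apply digit_div_eq hd0 hd _ hj
  rw [hX, Nat.mul_add_div hq, Nat.mul_div_cancel_left _ hq,
    Nat.div_eq_of_lt (by omega), Nat.add_zero]

lemma digit_mul_q_self (hd0 : d 0 = 1) (hd : ∀ j, 1 ≤ j → 2 ≤ d j)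
    (b : ℕ) {z : ℕ} (hz : 1 ≤ z) : digit d (b * q d (z-1)) z = b % d z := by
  unfold digit
  rw [Nat.mul_div_cancel _ (q_pos hd0 hd _)]

lemma zeta_spec (hd0 : d 0 = 1) (hd : ∀ j, 1 ≤ j → 2 ≤ d j) (n : ℕ) :
    1 ≤ zeta d n ∧ digit d n (zeta d n) ≠ d (zeta d n) - 1 := by
  have hne : {j | 1 ≤ j ∧ digit d n j ≠ d j - 1}.Nonempty := by
    refine ⟨n + 2, by omega, ?_⟩
    have h1 : n < q d (n+1) := lt_of_le_of_lt (by omega) (lt_q hd0 hd (n+1))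
    have h2 : digit d n (n+2) = 0 := digit_of_lt (by simpa using h1)
    have := hd (n+2) (by omega)
    omega
  exact Nat.sInf_mem hne

lemma digit_lt_zeta {n j : ℕ} (h1 : 1 ≤ j) (h2 : j < zeta d n) :
    digit d n j = d j - 1 := by
  have := Nat.notMem_of_lt_sInf (s := {j | 1 ≤ j ∧ digit d n j ≠ d j - 1}) h2
  simp only [Set.mem_setOf_eq, not_and, not_ne_iff] at this
  exact this h1

lemma zeta_le {n j : ℕ} (h1 : 1 ≤ j) (h2 : digit d n j ≠ d j - 1) : zeta d n ≤ j :=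
  Nat.sInf_le ⟨h1, h2⟩

lemma mod_q_of_max (hd0 : d 0 = 1) (hd : ∀ j, 1 ≤ j → 2 ≤ d j) {n r : ℕ}
    (h : ∀ j, 1 ≤ j → j ≤ r → digit d n j = d j - 1) :
    n % q d r = q d r - 1 := by
  induction r with
  | zero => rw [q_zero hd0]; omega
  | succ k ih =>
      have ihh := ih (fun j hj1 hj2 => h j hj1 (by omega))
      rw [q_succ, mod_mul' n (q d k) (d (k+1)), ihh]
      have hdig : n / q d k % d (k+1) = d (k+1) - 1 := by
        have := h (k+1) (by omega) (by omega)
        unfold digit at this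
        simpa using this
      rw [hdig]
      have h1 : 1 ≤ q d k := q_pos hd0 hd k
      have h2 : 2 ≤ d (k+1) := hd _ (by omega)
      have e : q d k * (d (k+1) - 1) = q d k * d (k+1) - q d k := by
        rw [Nat.mul_sub, Nat.mul_one]
      have h3 : q d k ≤ q d k * d (k+1) := Nat.le_mul_of_pos_right _ (by omega)
      omega




lemma mod_q_zeta_pred (hd0 : d 0 = 1) (hd : ∀ j, 1 ≤ j → 2 ≤ d j) (n : ℕ) :
    n % q d (zeta d n - 1) = q d (zeta d n - 1) - 1 := by
  apply mod_q_of_max hd0 hd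
  intro j hj1 hj2
  exact digit_lt_zeta hj1 (by have := (zeta_spec hd0 hd n).1; omega)

lemma digit_zeta_le (hd0 : d 0 = 1) (hd : ∀ j, 1 ≤ j → 2 ≤ d j) (n : ℕ) :
    digit d n (zeta d n) ≤ d (zeta d n) - 2 := by
  have h1 := (zeta_spec hd0 hd n).1
  have h2 := (zeta_spec hd0 hd n).2
  have h3 := digit_lt hd0 hd n (zeta d n)
  have h4 := hd _ h1
  omega

lemma mod_q_zeta (hd0 : d 0 = 1) (hd : ∀ j, 1 ≤ j → 2 ≤ d j) (n : ℕ) :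
    n % q d (zeta d n)
      = q d (zeta d n - 1) * digit d n (zeta d n) + (q d (zeta d n - 1) - 1) := by
  have hz := (zeta_spec hd0 hd n).1
  rw [q_pred_mul hd0 hz, mod_mul' n (q d (zeta d n - 1)) (d (zeta d n)),
    mod_q_zeta_pred hd0 hd n]
  rfl

lemma mod_q_zeta_succ_lt (hd0 : d 0 = 1) (hd : ∀ j, 1 ≤ j → 2 ≤ d j) (n : ℕ) :
    n % q d (zeta d n) + 1 < q d (zeta d n) := by
  have hz := (zeta_spec hd0 hd n).1
  rw [mod_q_zeta hd0 hd n, q_pred_mul hd0 hz]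
  have h1 : 0 < q d (zeta d n - 1) := q_pos hd0 hd _
  have h2 := digit_zeta_le hd0 hd n
  have h3 := hd _ hz
  have h4 : q d (zeta d n - 1) * (digit d n (zeta d n) + 1)
      ≤ q d (zeta d n - 1) * (d (zeta d n) - 1) := Nat.mul_le_mul_left _ (by omega)
  have h5 : q d (zeta d n - 1) * (d (zeta d n) - 1)
      < q d (zeta d n - 1) * d (zeta d n) := by
    exact Nat.mul_lt_mul_of_le_of_lt (le_refl _) (by omega) h1
  have e : q d (zeta d n - 1) * (digit d n (zeta d n) + 1)
      = q d (zeta d n - 1) * digit d n (zeta d n) + q d (zeta d n - 1) := by ring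
  omega

lemma div_q_zeta_succ (hd0 : d 0 = 1) (hd : ∀ j, 1 ≤ j → 2 ≤ d j) (n : ℕ) :
    (n + 1) / q d (zeta d n) = n / q d (zeta d n) := by
  have hq : 0 < q d (zeta d n) := q_pos hd0 hd _
  have h1 : n + 1 = q d (zeta d n) * (n / q d (zeta d n)) + (n % q d (zeta d n) + 1) := by
    have := Nat.div_add_mod n (q d (zeta d n)); omega
  rw [h1, Nat.mul_add_div hq, Nat.div_eq_of_lt (mod_q_zeta_succ_lt hd0 hd n)]
  omega

lemma digits_succ_lt (hd0 : d 0 = 1) (hd : ∀ j, 1 ≤ j → 2 ≤ d j) {n j : ℕ}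
    (h1 : 1 ≤ j) (h2 : j < zeta d n) : digit d (n+1) j = 0 := by
  have hz := (zeta_spec hd0 hd n).1
  have hdvd : q d (zeta d n - 1) ∣ (n + 1) := by
    have := Nat.div_add_mod n (q d (zeta d n - 1))
    have hm := mod_q_zeta_pred hd0 hd n
    have hq : 0 < q d (zeta d n - 1) := q_pos hd0 hd _
    exact ⟨n / q d (zeta d n - 1) + 1, by
      rw [Nat.mul_add, Nat.mul_one]; omega⟩
  exact digit_of_dvd hd0 hd h1 (by omega) hdvd

lemma digits_succ_self (hd0 : d 0 = 1) (hd : ∀ j, 1 ≤ j → 2 ≤ d j) (n : ℕ) :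
    digit d (n+1) (zeta d n) = digit d n (zeta d n) + 1 := by
  have hz := (zeta_spec hd0 hd n).1
  have hq : 0 < q d (zeta d n - 1) := q_pos hd0 hd _
  have hm := mod_q_zeta_pred hd0 hd n
  have hdiv : (n+1) / q d (zeta d n - 1) = n / q d (zeta d n - 1) + 1 := by
    have hdm := Nat.div_add_mod n (q d (zeta d n - 1))
    have : n + 1 = q d (zeta d n - 1) * (n / q d (zeta d n - 1) + 1) := by
      rw [Nat.mul_add, Nat.mul_one]; omega
    rw [this, Nat.mul_div_cancel_left _ hq]
  unfold digit
  rw [hdiv]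
  have ha := digit_zeta_le hd0 hd n
  unfold digit at ha
  have hd2 := hd _ hz
  have hmod : n / q d (zeta d n - 1) % d (zeta d n) + 1 < d (zeta d n) := by omega
  rw [Nat.add_mod, Nat.one_mod_eq_one.2 (by omega), Nat.mod_eq_of_lt hmod]

lemma digits_succ_gt (hd0 : d 0 = 1) (hd : ∀ j, 1 ≤ j → 2 ≤ d j) {n j : ℕ}
    (h : zeta d n < j) : digit d (n+1) j = digit d n j :=
  digit_div_eq hd0 hd (div_q_zeta_succ hd0 hd n) (by omega)

lemma mr_le (hd0 : d 0 = 1) (hd : ∀ j, 1 ≤ j → 2 ≤ d j) {n r : ℕ}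
    (h2 : r < zeta d n) : q d r - 1 ≤ n := by
  have hm : n % q d r = q d r - 1 := by
    apply mod_q_of_max hd0 hd
    intro j hj1 hj2
    exact digit_lt_zeta hj1 (by omega)
  have := Nat.mod_le n (q d r)
  omega

lemma mr_dvd (hd0 : d 0 = 1) (hd : ∀ j, 1 ≤ j → 2 ≤ d j) {n r : ℕ}
    (h2 : r < zeta d n) : q d r ∣ (n - (q d r - 1)) := by
  have hm : n % q d r = q d r - 1 := by
    apply mod_q_of_max hd0 hd
    intro j hj1 hj2
    exact digit_lt_zeta hj1 (by omega)
  have hdm := Nat.div_add_mod n (q d r)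
  exact ⟨n / q d r, by omega⟩

lemma digits_mr_le (hd0 : d 0 = 1) (hd : ∀ j, 1 ≤ j → 2 ≤ d j) {n r j : ℕ}
    (h2 : r < zeta d n) (hj1 : 1 ≤ j) (hj2 : j ≤ r) :
    digit d (n - (q d r - 1)) j = 0 :=
  digit_of_dvd hd0 hd hj1 hj2 (mr_dvd hd0 hd h2)

lemma digits_mr_gt (hd0 : d 0 = 1) (hd : ∀ j, 1 ≤ j → 2 ≤ d j) {n r j : ℕ}
    (h2 : r < zeta d n) (hj : r < j) :
    digit d (n - (q d r - 1)) j = digit d n j := by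
  have hle := mr_le hd0 hd h2
  have : n = (n - (q d r - 1)) + (q d r - 1) := by omega
  conv_rhs => rw [this]
  rw [digit_add_pred hd0 hd (mr_dvd hd0 hd h2) (by omega)]

lemma digit_q_eq (hd0 : d 0 = 1) (hd : ∀ j, 1 ≤ j → 2 ≤ d j) {r j : ℕ} (hj : 1 ≤ j) :
    digit d (q d r) j = if j = r + 1 then 1 else 0 := by
  rcases lt_trichotomy j (r+1) with h | h | h
  · rw [if_neg (by omega)]
    exact digit_of_dvd hd0 hd hj (by omega) dvd_rfl
  · rw [if_pos h, h]
    have : q d r = 1 * q d ((r+1) - 1) := by simp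
    rw [this, digit_mul_q_self hd0 hd 1 (by omega)]
    exact Nat.one_mod_eq_one.2 (by have := hd (r+1) (by omega); omega)
  · rw [if_neg (by omega)]
    apply digit_of_lt
    calc q d r < q d (j-1) := q_mono hd0 hd (by omega)

variable (d p) in
def io (lam : ℂ) : ℕ → ℂ
  | 0 => lam
  | r+1 => (io lam r ^ d r - (1 - (p (r+1) : ℂ))) / (p (r+1) : ℂ)

variable (d p) in
def vl (lam : ℂ) (n : ℕ) : ℂ := ∏ j ∈ Finset.Icc 1 n, io d p lam j ^ digit d n j

lemma pc_ne (hp : ∀ j, 1 ≤ j → p j ∈ Set.Ioc (0 : ℝ) 1) {j : ℕ} (hj : 1 ≤ j) :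
    (p j : ℂ) ≠ 0 := by
  exact_mod_cast ne_of_gt (show (0:ℝ) < p j from (hp j hj).1)

lemma io_rec (hp : ∀ j, 1 ≤ j → p j ∈ Set.Ioc (0 : ℝ) 1) (lam : ℂ) (r : ℕ) :
    io d p lam r ^ d r = (p (r+1) : ℂ) * io d p lam (r+1) + (1 - (p (r+1) : ℂ)) := by
  rw [io, mul_div_cancel₀ _ (pc_ne hp (by omega))]
  ring

lemma io_one (hd0 : d 0 = 1) (hp : ∀ j, 1 ≤ j → p j ∈ Set.Ioc (0 : ℝ) 1) (r : ℕ) :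
    io d p 1 r = 1 := by
  induction r with
  | zero => rfl
  | succ k ih =>
      rw [io, ih, one_pow]
      rw [div_eq_one_iff_eq (pc_ne hp (by omega))]
      ring

lemma vl_zero' (lam : ℂ) : vl d p lam 0 = 1 := by simp [vl]

lemma vl_eq_prod (hd0 : d 0 = 1) (hd : ∀ j, 1 ≤ j → 2 ≤ d j) (lam : ℂ) {n N : ℕ}
    (hN : n ≤ N) : vl d p lam n = ∏ j ∈ Icc 1 N, io d p lam j ^ digit d n j := by
  unfold vl
  apply Finset.prod_subset (Finset.Icc_subset_Icc_right hN)
  intro j hj hj2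
  simp only [Finset.mem_Icc] at hj hj2
  have hnj : n < j := by omega
  have : n < q d (j-1) := by
    calc n < j := hnj
    _ ≤ q d (j-1) := by have := lt_q hd0 hd (j-1); omega
  rw [digit_of_lt this, pow_zero]

lemma vl_q (hd0 : d 0 = 1) (hd : ∀ j, 1 ≤ j → 2 ≤ d j) (lam : ℂ) (r : ℕ) :
    vl d p lam (q d r) = io d p lam (r+1) := by
  have h1 : r + 1 ≤ q d r := lt_q hd0 hd r
  rw [vl_eq_prod hd0 hd lam (le_refl (q d r))]
  rw [Finset.prod_eq_single (r+1)]
  · rw [digit_q_eq hd0 hd (by omega), if_pos rfl, pow_one]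
  · intro j hj hne
    simp only [Finset.mem_Icc] at hj
    rw [digit_q_eq hd0 hd (by omega), if_neg hne, pow_zero]
  · intro h
    exact absurd (Finset.mem_Icc.2 ⟨by omega, h1⟩) h

lemma alg (hd0 : d 0 = 1) (hd : ∀ j, 1 ≤ j → 2 ≤ d j)
    (hp : ∀ j, 1 ≤ j → p j ∈ Set.Ioc (0 : ℝ) 1) (lam : ℂ) (w : ℕ) :
    (lam - (1 - (p 1 : ℂ))) * ∏ j ∈ Icc 1 w, io d p lam j ^ (d j - 1)
    = (∏ j ∈ Icc 1 (w+1), (p j : ℂ)) * io d p lam (w+1)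
      + ∑ r ∈ Icc 1 w, (1 - (p (r+1) : ℂ)) * (∏ j ∈ Icc 1 r, (p j : ℂ))
          * ∏ j ∈ Icc (r+1) w, io d p lam j ^ (d j - 1) := by
  induction w with
  | zero =>
      have he : Finset.Icc 1 0 = (∅ : Finset ℕ) := rfl
      rw [he]
      simp only [Finset.prod_empty, Finset.sum_empty, mul_one, add_zero, zero_add,
        Finset.Icc_self, Finset.prod_singleton]
      have h1 : io d p lam 1 = (lam ^ d 0 - (1 - (p 1 : ℂ))) / (p 1 : ℂ) := by
        simp [io]
      rw [h1, hd0, pow_one, mul_div_cancel₀ _ (pc_ne hp (by omega))]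
  | succ w ih =>
      have hw1 : (1:ℕ) ≤ w + 1 := by omega
      have hprodsplit : ∏ j ∈ Icc 1 (w+1), io d p lam j ^ (d j - 1)
          = (∏ j ∈ Icc 1 w, io d p lam j ^ (d j - 1)) * io d p lam (w+1) ^ (d (w+1) - 1) :=
        Finset.prod_Icc_succ_top hw1 _
      have hPsplit : ∏ j ∈ Icc 1 (w+2), (p j : ℂ)
          = (∏ j ∈ Icc 1 (w+1), (p j : ℂ)) * (p (w+2) : ℂ) :=
        Finset.prod_Icc_succ_top (by omega) _
      have hsumsplit : ∑ r ∈ Icc 1 (w+1), (1 - (p (r+1) : ℂ)) * (∏ j ∈ Icc 1 r, (p j : ℂ))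
            * ∏ j ∈ Icc (r+1) (w+1), io d p lam j ^ (d j - 1)
          = (∑ r ∈ Icc 1 w, (1 - (p (r+1) : ℂ)) * (∏ j ∈ Icc 1 r, (p j : ℂ))
            * ∏ j ∈ Icc (r+1) w, io d p lam j ^ (d j - 1)) * io d p lam (w+1) ^ (d (w+1) - 1)
            + (1 - (p (w+2) : ℂ)) * (∏ j ∈ Icc 1 (w+1), (p j : ℂ)) := by
        rw [Finset.sum_Icc_succ_top hw1, Finset.sum_mul]
        congr 1
        · apply Finset.sum_congr rfl
          intro r hr
          simp only [Finset.mem_Icc] at hr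
          rw [Finset.prod_Icc_succ_top (by omega :  r + 1 ≤ w + 1)]
          ring
        · rw [Finset.Icc_eq_empty_of_lt (by omega : w + 1 + 1 > w + 1)]
          simp
      have hrec : io d p lam (w+1) ^ (d (w+1) - 1) * io d p lam (w+1)
          = (p (w+2) : ℂ) * io d p lam (w+2) + (1 - (p (w+2) : ℂ)) := by
        rw [pow_sub_one_mul (by have := hd (w+1) (by omega); omega)]
        exact io_rec hp lam (w+1)
      rw [hprodsplit, hPsplit, hsumsplit]
      linear_combination io d p lam (w+1) ^ (d (w+1) - 1) * ih
        + (∏ j ∈ Icc 1 (w+1), (p j : ℂ)) * hrec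

end Aux

section Aux2
variable {d : ℕ → ℕ} {p : ℕ → ℝ}

lemma q_two_le (hd0 : d 0 = 1) (hd : ∀ j, 1 ≤ j → 2 ≤ d j) {r : ℕ} (hr : 1 ≤ r) :
    2 ≤ q d r := by
  have h1 := q_mono hd0 hd (show 0 < r from hr)
  have h2 := q_zero (d := d) hd0
  omega

lemma s_next (n : ℕ) : s d p n (n+1) = ∏ j ∈ Icc 1 (zeta d n), p j := by
  simp only [s]; rw [if_pos trivial]

lemma s_self (n : ℕ) : s d p n n = 1 - p 1 := by
  simp only [s]; rw [if_neg (by omega), if_pos trivial]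

lemma s_back (hd0 : d 0 = 1) (hd : ∀ j, 1 ≤ j → 2 ≤ d j) (n r : ℕ)
    (h1 : 1 ≤ r) (h2 : r + 1 ≤ zeta d n) :
    s d p n (n - (q d r - 1)) = (1 - p (r+1)) * ∏ j ∈ Icc 1 r, p j := by
  have hle : q d r - 1 ≤ n := mr_le hd0 hd (by omega)
  have h2q : 2 ≤ q d r := q_two_le hd0 hd h1
  have hex : ∃ r', 1 ≤ r' ∧ r' + 1 ≤ zeta d n ∧
      n = (n - (q d r - 1)) + ∑ j ∈ Icc 1 r', (d j - 1) * q d (j-1) :=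
    ⟨r, h1, h2, by rw [sum_dq hd0 hd]; omega⟩
  simp only [s]
  rw [if_neg (by omega), if_neg (by omega), dif_pos hex]
  obtain ⟨hc1, hc2, hc3⟩ := hex.choose_spec
  rw [sum_dq hd0 hd] at hc3
  have hq1 : 1 ≤ q d hex.choose := q_pos hd0 hd _
  have heq : q d hex.choose = q d r := by omega
  have hcr : hex.choose = r := (q_mono hd0 hd).injective heq
  rw [hcr]

lemma s_eq_zero (hd0 : d 0 = 1) (hd : ∀ j, 1 ≤ j → 2 ≤ d j) (n m : ℕ)
    (h1 : m ≠ n) (h2 : m ≠ n + 1)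
    (h3 : ∀ r, 1 ≤ r → r + 1 ≤ zeta d n → m ≠ n - (q d r - 1)) : s d p n m = 0 := by
  simp only [s]
  rw [if_neg h2, if_neg h1, dif_neg]
  rintro ⟨r, hr1, hr2, hr3⟩
  rw [sum_dq hd0 hd] at hr3
  exact h3 r hr1 hr2 (by omega)

lemma s_apply_eig (hd0 : d 0 = 1) (hd : ∀ j, 1 ≤ j → 2 ≤ d j) (v : ℕ → ℂ) (n : ℕ) :
    ∑' m, (s d p n m : ℂ) * v m
    = (1 - (p 1 : ℂ)) * v n + (∏ j ∈ Icc 1 (zeta d n), (p j : ℂ)) * v (n+1)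
      + ∑ r ∈ Icc 1 (zeta d n - 1),
          (1 - (p (r+1) : ℂ)) * (∏ j ∈ Icc 1 r, (p j : ℂ)) * v (n - (q d r - 1)) := by
  classical
  have hz := (zeta_spec hd0 hd n).1
  set T : Finset ℕ := (Icc 1 (zeta d n - 1)).image (fun r => n - (q d r - 1)) with hT
  set M : Finset ℕ := insert n (insert (n+1) T) with hM
  have himg : ∀ m ∈ T, m < n := by
    intro m hm
    simp only [hT, Finset.mem_image, Finset.mem_Icc] at hm
    obtain ⟨r, ⟨hr1, hr2⟩, rfl⟩ := hm
    have := mr_le hd0 hd (show r < zeta d n by omega)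
    have := q_two_le hd0 hd hr1
    omega
  have hsupp : ∀ m ∉ M, (s d p n m : ℂ) * v m = 0 := by
    intro m hm
    simp only [hM, Finset.mem_insert, not_or] at hm
    obtain ⟨hm1, hm2, hm3⟩ := hm
    rw [s_eq_zero hd0 hd n m hm1 hm2, Complex.ofReal_zero, zero_mul]
    intro r hr1 hr2 hmeq
    apply hm3
    rw [hT, hmeq]
    exact Finset.mem_image_of_mem _ (Finset.mem_Icc.2 ⟨hr1, by omega⟩)
  rw [tsum_eq_sum hsupp]
  have hn1 : n ∉ insert (n+1) T := by
    simp only [Finset.mem_insert, not_or]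
    exact ⟨by omega, fun h => by have := himg n h; omega⟩
  have hn2 : (n+1) ∉ T := fun h => by have := himg (n+1) h; omega
  rw [hM, Finset.sum_insert hn1, Finset.sum_insert hn2]
  have hinj : ∀ x ∈ Icc 1 (zeta d n - 1), ∀ y ∈ Icc 1 (zeta d n - 1),
      n - (q d x - 1) = n - (q d y - 1) → x = y := by
    intro x hx y hy hxy
    simp only [Finset.mem_Icc] at hx hy
    have hlx := mr_le hd0 hd (show x < zeta d n by omega)
    have hly := mr_le hd0 hd (show y < zeta d n by omega)
    have hqx : 1 ≤ q d x := q_pos hd0 hd x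
    have hqy : 1 ≤ q d y := q_pos hd0 hd y
    have : q d x = q d y := by omega
    exact (q_mono hd0 hd).injective this
  rw [hT, Finset.sum_image hinj]
  rw [s_self, s_next]
  have hsum : ∑ r ∈ Icc 1 (zeta d n - 1), (s d p n (n - (q d r - 1)) : ℂ) * v (n - (q d r - 1))
      = ∑ r ∈ Icc 1 (zeta d n - 1),
          (1 - (p (r+1) : ℂ)) * (∏ j ∈ Icc 1 r, (p j : ℂ)) * v (n - (q d r - 1)) := by
    apply Finset.sum_congr rfl
    intro r hr
    simp only [Finset.mem_Icc] at hr
    rw [s_back hd0 hd n r hr.1 (by omega)]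
    push_cast
    ring
  rw [hsum]
  push_cast
  ring

lemma Icc_one_eq_Ioc (N : ℕ) : Finset.Icc 1 N = Finset.Ioc 0 N := Finset.Icc_add_one_left_eq_Ioc 0 N
lemma Icc_succ_eq_Ioc (a b : ℕ) : Finset.Icc (a+1) b = Finset.Ioc a b := Finset.Icc_add_one_left_eq_Ioc a b

lemma vl_split (hd0 : d 0 = 1) (hd : ∀ j, 1 ≤ j → 2 ≤ d j) (lam : ℂ) {m N z : ℕ}
    (hz : 1 ≤ z) (hzN : z ≤ N) (hm : m ≤ N) :
    vl d p lam m = ((∏ j ∈ Icc 1 (z-1), io d p lam j ^ digit d m j)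
        * io d p lam z ^ digit d m z)
      * ∏ j ∈ Ioc z N, io d p lam j ^ digit d m j := by
  obtain ⟨w, rfl⟩ : ∃ w, z = w + 1 := ⟨z - 1, by omega⟩
  rw [vl_eq_prod hd0 hd lam hm, Icc_one_eq_Ioc N]
  rw [← Finset.prod_Ioc_consecutive _ (Nat.zero_le (w+1)) hzN]
  rw [Finset.prod_Ioc_succ_top (Nat.zero_le w)]
  rw [Icc_one_eq_Ioc]
  simp

lemma vl_eig (hd0 : d 0 = 1) (hd : ∀ j, 1 ≤ j → 2 ≤ d j)
    (hp : ∀ j, 1 ≤ j → p j ∈ Set.Ioc (0 : ℝ) 1) (lam : ℂ) (n : ℕ) :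
    lam * vl d p lam n
    = (1 - (p 1 : ℂ)) * vl d p lam n
      + (∏ j ∈ Icc 1 (zeta d n), (p j : ℂ)) * vl d p lam (n+1)
      + ∑ r ∈ Icc 1 (zeta d n - 1), (1 - (p (r+1) : ℂ)) * (∏ j ∈ Icc 1 r, (p j : ℂ))
          * vl d p lam (n - (q d r - 1)) := by
  set z := zeta d n with hzdef
  have hz : 1 ≤ z := (zeta_spec hd0 hd n).1
  have hzn : z ≤ n + 1 := by
    have h1 : q d (z-1) - 1 ≤ n := mr_le hd0 hd (show z - 1 < z by omega)
    have h2 : z - 1 < q d (z-1) := lt_q hd0 hd (z-1)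
    omega
  set C : ℂ := ∏ j ∈ Ioc z (n+1), io d p lam j ^ digit d n j with hC
  set Q0 : ℂ := ∏ j ∈ Icc 1 (z-1), io d p lam j ^ (d j - 1) with hQ0
  have h_n : vl d p lam n = Q0 * io d p lam z ^ digit d n z * C := by
    rw [vl_split hd0 hd lam hz hzn (by omega)]
    congr 1
    congr 1
    apply Finset.prod_congr rfl
    intro j hj
    simp only [Finset.mem_Icc] at hj
    rw [digit_lt_zeta (by omega) (show j < z by omega)]
  have h_succ : vl d p lam (n+1) = io d p lam z ^ (digit d n z + 1) * C := by
    rw [vl_split hd0 hd lam hz hzn (le_refl (n+1))]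
    have e1 : ∏ j ∈ Icc 1 (z-1), io d p lam j ^ digit d (n+1) j = 1 := by
      apply Finset.prod_eq_one
      intro j hj
      simp only [Finset.mem_Icc] at hj
      rw [digits_succ_lt hd0 hd (by omega) (show j < z by omega), pow_zero]
    have e2 : digit d (n+1) z = digit d n z + 1 := digits_succ_self hd0 hd n
    have e3 : ∏ j ∈ Ioc z (n+1), io d p lam j ^ digit d (n+1) j = C := by
      apply Finset.prod_congr rfl
      intro j hj
      simp only [Finset.mem_Ioc] at hj
      rw [digits_succ_gt hd0 hd (show z < j by omega)]
    rw [e1, e2, e3, one_mul]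
  have h_mr : ∀ r ∈ Icc 1 (z-1), vl d p lam (n - (q d r - 1))
      = (∏ j ∈ Icc (r+1) (z-1), io d p lam j ^ (d j - 1)) * io d p lam z ^ digit d n z * C := by
    intro r hr
    simp only [Finset.mem_Icc] at hr
    have hrz : r < z := by omega
    rw [vl_split hd0 hd lam hz hzn (by omega : n - (q d r - 1) ≤ n + 1)]
    have e1 : ∏ j ∈ Icc 1 (z-1), io d p lam j ^ digit d (n - (q d r - 1)) j
        = ∏ j ∈ Icc (r+1) (z-1), io d p lam j ^ (d j - 1) := by
      rw [Icc_one_eq_Ioc (z-1),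
        ← Finset.prod_Ioc_consecutive _ (Nat.zero_le r) (show r ≤ z - 1 by omega)]
      have f1 : ∏ j ∈ Ioc 0 r, io d p lam j ^ digit d (n - (q d r - 1)) j = 1 := by
        apply Finset.prod_eq_one
        intro j hj
        simp only [Finset.mem_Ioc] at hj
        rw [digits_mr_le hd0 hd hrz (by omega) (by omega), pow_zero]
      have f2 : ∏ j ∈ Ioc r (z-1), io d p lam j ^ digit d (n - (q d r - 1)) j
          = ∏ j ∈ Icc (r+1) (z-1), io d p lam j ^ (d j - 1) := by
        rw [Icc_succ_eq_Ioc]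
        apply Finset.prod_congr rfl
        intro j hj
        simp only [Finset.mem_Ioc] at hj
        rw [digits_mr_gt hd0 hd hrz (by omega), digit_lt_zeta (by omega) (by omega)]
      rw [f1, f2, one_mul]
    have e2 : digit d (n - (q d r - 1)) z = digit d n z :=
      digits_mr_gt hd0 hd hrz (by omega)
    have e3 : ∏ j ∈ Ioc z (n+1), io d p lam j ^ digit d (n - (q d r - 1)) j = C := by
      apply Finset.prod_congr rfl
      intro j hj
      simp only [Finset.mem_Ioc] at hj
      rw [digits_mr_gt hd0 hd hrz (by omega)]
    rw [e1, e2, e3]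
  have halg := alg hd0 hd hp lam (z-1)
  rw [show z - 1 + 1 = z by omega] at halg
  rw [← hQ0] at halg
  have hs0 : ∑ r ∈ Icc 1 (z-1), (1 - (p (r+1) : ℂ)) * (∏ j ∈ Icc 1 r, (p j : ℂ))
        * vl d p lam (n - (q d r - 1))
      = (∑ r ∈ Icc 1 (z-1), (1 - (p (r+1) : ℂ)) * (∏ j ∈ Icc 1 r, (p j : ℂ))
          * ∏ j ∈ Icc (r+1) (z-1), io d p lam j ^ (d j - 1))
        * (io d p lam z ^ digit d n z * C) := by
    rw [Finset.sum_mul]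
    apply Finset.sum_congr rfl
    intro r hr
    rw [h_mr r hr]
    ring
  rw [h_n, h_succ, hs0, pow_succ]
  linear_combination (io d p lam z ^ digit d n z * C) * halg

lemma prodP_ne (hp : ∀ j, 1 ≤ j → p j ∈ Set.Ioc (0 : ℝ) 1) (b : ℕ) :
    (∏ j ∈ Icc 1 b, (p j : ℂ)) ≠ 0 := by
  apply Finset.prod_ne_zero_iff.2
  intro j hj
  simp only [Finset.mem_Icc] at hj
  exact pc_ne hp hj.1

lemma eig_unique (hd0 : d 0 = 1) (hd : ∀ j, 1 ≤ j → 2 ≤ d j)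
    (hp : ∀ j, 1 ≤ j → p j ∈ Set.Ioc (0 : ℝ) 1) (lam : ℂ) (v w : ℕ → ℂ)
    (hv : ∀ n, lam * v n
      = (1 - (p 1 : ℂ)) * v n + (∏ j ∈ Icc 1 (zeta d n), (p j : ℂ)) * v (n+1)
        + ∑ r ∈ Icc 1 (zeta d n - 1), (1 - (p (r+1) : ℂ)) * (∏ j ∈ Icc 1 r, (p j : ℂ))
            * v (n - (q d r - 1)))
    (hw : ∀ n, lam * w n
      = (1 - (p 1 : ℂ)) * w n + (∏ j ∈ Icc 1 (zeta d n), (p j : ℂ)) * w (n+1)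
        + ∑ r ∈ Icc 1 (zeta d n - 1), (1 - (p (r+1) : ℂ)) * (∏ j ∈ Icc 1 r, (p j : ℂ))
            * w (n - (q d r - 1)))
    (h0 : v 0 = w 0) : ∀ n, v n = w n := by
  intro n
  induction n using Nat.strong_induction_on with
  | _ n ih =>
    match n, ih with
    | 0, _ => exact h0
    | (k+1), ih =>
      have hvk := hv k
      have hwk := hw k
      have hPne : (∏ j ∈ Icc 1 (zeta d k), (p j : ℂ)) ≠ 0 := prodP_ne hp (zeta d k)
      have h1 : v k = w k := ih k (by omega)
      have h2 : ∑ r ∈ Icc 1 (zeta d k - 1), (1 - (p (r+1) : ℂ)) * (∏ j ∈ Icc 1 r, (p j : ℂ))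
            * v (k - (q d r - 1))
          = ∑ r ∈ Icc 1 (zeta d k - 1), (1 - (p (r+1) : ℂ)) * (∏ j ∈ Icc 1 r, (p j : ℂ))
            * w (k - (q d r - 1)) := by
        apply Finset.sum_congr rfl
        intro r hr
        congr 1
        exact ih _ (by omega)
      have h3 : (∏ j ∈ Icc 1 (zeta d k), (p j : ℂ)) * v (k+1)
          = (∏ j ∈ Icc 1 (zeta d k), (p j : ℂ)) * w (k+1) := by
        linear_combination (-1 : ℂ) * hvk + hwk + lam * h1 - (1 - (p 1 : ℂ)) * h1 - h2
      exact mul_left_cancel₀ hPne h3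

lemma eig_scal (lam c : ℂ) (v : ℕ → ℂ)
    (hv : ∀ n, lam * v n
      = (1 - (p 1 : ℂ)) * v n + (∏ j ∈ Icc 1 (zeta d n), (p j : ℂ)) * v (n+1)
        + ∑ r ∈ Icc 1 (zeta d n - 1), (1 - (p (r+1) : ℂ)) * (∏ j ∈ Icc 1 r, (p j : ℂ))
            * v (n - (q d r - 1))) :
    ∀ n, lam * (c * v n)
      = (1 - (p 1 : ℂ)) * (c * v n) + (∏ j ∈ Icc 1 (zeta d n), (p j : ℂ)) * (c * v (n+1))
        + ∑ r ∈ Icc 1 (zeta d n - 1), (1 - (p (r+1) : ℂ)) * (∏ j ∈ Icc 1 r, (p j : ℂ))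
            * (c * v (n - (q d r - 1))) := by
  intro n
  have hs : ∑ r ∈ Icc 1 (zeta d n - 1), (1 - (p (r+1) : ℂ)) * (∏ j ∈ Icc 1 r, (p j : ℂ))
        * (c * v (n - (q d r - 1)))
      = c * ∑ r ∈ Icc 1 (zeta d n - 1), (1 - (p (r+1) : ℂ)) * (∏ j ∈ Icc 1 r, (p j : ℂ))
        * v (n - (q d r - 1)) := by
    rw [Finset.mul_sum]
    apply Finset.sum_congr rfl
    intro r hr
    ring
  rw [hs]
  linear_combination c * hv n

lemma sum_row_one (hd0 : d 0 = 1) (hd : ∀ j, 1 ≤ j → 2 ≤ d j)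
    (hp : ∀ j, 1 ≤ j → p j ∈ Set.Ioc (0 : ℝ) 1) (n : ℕ) :
    (1 - (p 1 : ℂ)) + (∏ j ∈ Icc 1 (zeta d n), (p j : ℂ))
      + ∑ r ∈ Icc 1 (zeta d n - 1), (1 - (p (r+1) : ℂ)) * ∏ j ∈ Icc 1 r, (p j : ℂ) = 1 := by
  have hz : 1 ≤ zeta d n := (zeta_spec hd0 hd n).1
  have h := alg hd0 hd hp 1 (zeta d n - 1)
  rw [show zeta d n - 1 + 1 = zeta d n by omega] at h
  simp only [io_one hd0 hp, one_pow, Finset.prod_const_one, mul_one] at h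
  linear_combination (-1 : ℂ) * h

lemma zeta_mul_d1 (hd0 : d 0 = 1) (hd : ∀ j, 1 ≤ j → 2 ≤ d j) (k : ℕ) :
    zeta d (k * d 1) = 1 := by
  have h1 : digit d (k * d 1) 1 = 0 := by
    unfold digit
    simp only [Nat.sub_self, q_zero hd0, Nat.div_one]
    exact Nat.mul_mod_left k (d 1)
  have h2 := hd 1 le_rfl
  have h3 : zeta d (k * d 1) ≤ 1 := zeta_le le_rfl (by omega)
  have h4 := (zeta_spec hd0 hd (k * d 1)).1
  omega

lemma norm_one_sub_p (hp : ∀ j, 1 ≤ j → p j ∈ Set.Ioc (0 : ℝ) 1) {j : ℕ} (hj : 1 ≤ j) :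
    ‖(1 - (p j : ℂ))‖ = 1 - p j := by
  have h := hp j hj
  rw [show (1 - (p j : ℂ)) = ((1 - p j : ℝ) : ℂ) by push_cast; ring, Complex.norm_real,
    Real.norm_of_nonneg (by linarith [h.2])]

lemma norm_p (hp : ∀ j, 1 ≤ j → p j ∈ Set.Ioc (0 : ℝ) 1) {j : ℕ} (hj : 1 ≤ j) :
    ‖((p j : ℝ) : ℂ)‖ = p j := by
  rw [Complex.norm_real, Real.norm_of_nonneg (le_of_lt (hp j hj).1)]

lemma io_succ_norm (hp : ∀ j, 1 ≤ j → p j ∈ Set.Ioc (0 : ℝ) 1) (lam : ℂ) (r : ℕ) :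
    ‖io d p lam (r+1)‖ ≤ (‖io d p lam r‖ ^ d r + (1 - p (r+1))) / p (r+1) := by
  have hpr := hp (r+1) (by omega)
  rw [io, norm_div, norm_p hp (by omega), div_le_div_iff_of_pos_right hpr.1]
  calc ‖io d p lam r ^ d r - (1 - (p (r+1) : ℂ))‖
      ≤ ‖io d p lam r ^ d r‖ + ‖(1 - (p (r+1) : ℂ))‖ := norm_sub_le _ _
    _ = ‖io d p lam r‖ ^ d r + (1 - p (r+1)) := by
        rw [norm_pow, norm_one_sub_p hp (by omega)]

lemma io_lower (hp : ∀ j, 1 ≤ j → p j ∈ Set.Ioc (0 : ℝ) 1) (lam : ℂ) (r : ℕ) :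
    1 - p (r+1) ≤ ‖io d p lam r‖ ^ d r + p (r+1) * ‖io d p lam (r+1)‖ := by
  have hpr := hp (r+1) (by omega)
  have heq : (1 - (p (r+1) : ℂ)) = io d p lam r ^ d r - (p (r+1) : ℂ) * io d p lam (r+1) := by
    rw [io, mul_div_cancel₀ _ (pc_ne hp (by omega))]
    ring
  have h1 : ‖(1 - (p (r+1) : ℂ))‖ = 1 - p (r+1) := norm_one_sub_p hp (by omega)
  calc 1 - p (r+1) = ‖(1 - (p (r+1) : ℂ))‖ := h1.symm
    _ ≤ ‖io d p lam r ^ d r‖ + ‖(p (r+1) : ℂ) * io d p lam (r+1)‖ := by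
        rw [heq]; exact norm_sub_le _ _
    _ = ‖io d p lam r‖ ^ d r + p (r+1) * ‖io d p lam (r+1)‖ := by
        rw [norm_pow, norm_mul, norm_p hp (by omega)]

lemma io_surj (hd0 : d 0 = 1) (hd : ∀ j, 1 ≤ j → 2 ≤ d j)
    (hp : ∀ j, 1 ≤ j → p j ∈ Set.Ioc (0 : ℝ) 1) :
    ∀ K (w : ℂ), ∃ lam, io d p lam K = w := by
  intro K
  induction K with
  | zero => exact fun w => ⟨w, rfl⟩
  | succ k ih =>
      intro w
      have hdk : 0 < d k := one_le_d hd0 hd k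
      obtain ⟨ξ, hξ⟩ := IsAlgClosed.exists_pow_nat_eq
        ((p (k+1) : ℂ) * w + (1 - (p (k+1) : ℂ))) hdk
      obtain ⟨lam, hlam⟩ := ih ξ
      refine ⟨lam, ?_⟩
      rw [io, hlam, hξ, add_sub_cancel_right]
      exact mul_div_cancel_left₀ w (pc_ne hp (by omega))

lemma exists_eps (hp : ∀ j, 1 ≤ j → p j ∈ Set.Ioc (0 : ℝ) 1)
    (h : ¬ Tendsto p atTop (nhds 1)) :
    ∃ ε : ℝ, 0 < ε ∧ ∀ N, ∃ j, N ≤ j ∧ 1 ≤ j ∧ ε ≤ 1 - p j := by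
  rw [Metric.tendsto_atTop] at h
  push_neg at h
  obtain ⟨ε, hε, hh⟩ := h
  refine ⟨ε, hε, fun N => ?_⟩
  obtain ⟨j, hj1, hj2⟩ := hh (max N 1)
  refine ⟨j, le_trans (le_max_left _ _) hj1, le_trans (le_max_right _ _) hj1, ?_⟩
  have hpj := hp j (le_trans (le_max_right _ _) hj1)
  rw [Real.dist_eq] at hj2
  have habs : |p j - 1| = 1 - p j := by
    rw [abs_of_nonpos (by linarith [hpj.2])]; ring
  rw [habs] at hj2
  exact hj2

lemma io_not_tendsto_zero (hd0 : d 0 = 1) (hd : ∀ j, 1 ≤ j → 2 ≤ d j)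
    (hp : ∀ j, 1 ≤ j → p j ∈ Set.Ioc (0 : ℝ) 1)
    (h : ¬ Tendsto p atTop (nhds 1)) (lam : ℂ)
    (htend : Tendsto (fun r => io d p lam r) atTop (nhds 0)) : False := by
  obtain ⟨ε, hε, hfreq⟩ := exists_eps hp h
  have hmin : 0 < min 1 (ε/4) := by
    apply lt_min one_pos; linarith
  obtain ⟨R, hR⟩ := Metric.tendsto_atTop.1 htend (min 1 (ε/4)) hmin
  obtain ⟨j, hjR, hj1, hjε⟩ := hfreq (R+2)
  set r := j - 1 with hrdef
  have hr : j = r + 1 := by omega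
  have hnorm : ∀ i, R ≤ i → ‖io d p lam i‖ < min 1 (ε/4) := by
    intro i hi
    have := hR i hi
    rwa [dist_zero_right] at this
  have h1 : ‖io d p lam r‖ < min 1 (ε/4) := hnorm r (by omega)
  have h2 : ‖io d p lam (r+1)‖ < min 1 (ε/4) := hnorm (r+1) (by omega)
  have hlow := io_lower (d := d) hp lam r
  have hdr : d r ≠ 0 := by have := one_le_d hd0 hd r; omega
  have hx : ‖io d p lam r‖ ^ d r ≤ ‖io d p lam r‖ :=
    pow_le_of_le_one (norm_nonneg _) (le_of_lt (lt_of_lt_of_le h1 (min_le_left _ _))) hdr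
  have hpj := hp j hj1
  rw [hr] at hjε hpj
  have hn1 : 0 ≤ ‖io d p lam (r+1)‖ := norm_nonneg _
  have hm1 : ‖io d p lam r‖ < ε/4 := lt_of_lt_of_le h1 (min_le_right _ _)
  have hm2 : ‖io d p lam (r+1)‖ < ε/4 := lt_of_lt_of_le h2 (min_le_right _ _)
  have hmul : p (r+1) * ‖io d p lam (r+1)‖ ≤ ‖io d p lam (r+1)‖ := by
    nlinarith [hpj.1, hpj.2]
  linarith

lemma vl_tendsto_zero (hd0 : d 0 = 1) (hd : ∀ j, 1 ≤ j → 2 ≤ d j)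
    (hp : ∀ j, 1 ≤ j → p j ∈ Set.Ioc (0 : ℝ) 1) (lam : ℂ) {K : ℕ} (hK : 1 ≤ K)
    (hbd : ∀ r, K + 1 ≤ r → ‖io d p lam r‖ ≤ 1)
    (htend0 : Tendsto (fun r => io d p lam r) atTop (nhds 0)) :
    Tendsto (vl d p lam) atTop (nhds 0) := by
  rw [Metric.tendsto_atTop]
  intro ε hε
  set B : ℝ := ∏ j ∈ Ioc 0 K, (max 1 ‖io d p lam j‖) ^ d j with hB
  have hB1 : 1 ≤ B := by
    rw [hB]
    calc (1:ℝ) = ∏ _j ∈ Ioc 0 K, (1:ℝ) := by simp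
      _ ≤ ∏ j ∈ Ioc 0 K, (max 1 ‖io d p lam j‖) ^ d j :=
        Finset.prod_le_prod (fun _ _ => zero_le_one)
          (fun j _ => one_le_pow₀ (le_max_left _ _))
  have hBpos : 0 < B := by linarith
  obtain ⟨R1, hR1⟩ := Metric.tendsto_atTop.1 htend0 (ε/B) (by positivity)
  set R := max R1 (K+1) with hR
  refine ⟨q d R, fun n hn => ?_⟩
  have hqR1 : 1 ≤ q d R := q_pos hd0 hd R
  -- the top nonzero digit position T
  set T := sInf {j | n < q d j} with hT
  have hTmem : n < q d T := Nat.sInf_mem (⟨n, lt_q hd0 hd n⟩ : {j | n < q d j}.Nonempty)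
  have hRT : R < T := by
    by_contra hc
    push_neg at hc
    have : q d T ≤ q d R := (q_mono hd0 hd).monotone hc
    omega
  have hT1 : 1 ≤ T := by omega
  have hTlow : q d (T-1) ≤ n := by
    have h := Nat.notMem_of_lt_sInf (show T - 1 < T by omega) (s := {j | n < q d j})
    simpa using h
  have hTn : T ≤ n := by
    have := lt_q hd0 hd (T-1)
    omega
  -- vl n as product up to T
  have hvl : vl d p lam n = ∏ j ∈ Icc 1 T, io d p lam j ^ digit d n j := by
    unfold vl
    symm
    apply Finset.prod_subset (Finset.Icc_subset_Icc_right hTn)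
    intro j hj hj2
    simp only [Finset.mem_Icc] at hj hj2
    have hjT : T < j := by omega
    have : n < q d (j-1) := lt_of_lt_of_le hTmem ((q_mono hd0 hd).monotone (by omega))
    rw [digit_of_lt this, pow_zero]
  have hnorm : ‖vl d p lam n‖ = ∏ j ∈ Icc 1 T, ‖io d p lam j‖ ^ digit d n j := by
    rw [hvl, norm_prod]
    apply Finset.prod_congr rfl
    intro j _
    rw [norm_pow]
  -- split
  have hsplit : ∏ j ∈ Icc 1 T, ‖io d p lam j‖ ^ digit d n j
      = (∏ j ∈ Ioc 0 K, ‖io d p lam j‖ ^ digit d n j)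
        * ∏ j ∈ Ioc K T, ‖io d p lam j‖ ^ digit d n j := by
    rw [Icc_one_eq_Ioc, Finset.prod_Ioc_consecutive _ (Nat.zero_le K) (by omega : K ≤ T)]
  have hbound1 : ∏ j ∈ Ioc 0 K, ‖io d p lam j‖ ^ digit d n j ≤ B := by
    apply Finset.prod_le_prod (fun j _ => by positivity)
    intro j _
    calc ‖io d p lam j‖ ^ digit d n j ≤ (max 1 ‖io d p lam j‖) ^ digit d n j :=
        pow_le_pow_left₀ (norm_nonneg _) (le_max_right _ _) _
      _ ≤ (max 1 ‖io d p lam j‖) ^ d j :=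
        pow_le_pow_right₀ (le_max_left _ _) (le_of_lt (digit_lt hd0 hd n j))
  have hbound2 : ∏ j ∈ Ioc K T, ‖io d p lam j‖ ^ digit d n j ≤ ‖io d p lam T‖ := by
    obtain ⟨w, hw⟩ : ∃ w, T = w + 1 := ⟨T - 1, by omega⟩
    have hdig : 1 ≤ digit d n T := by
      unfold digit
      have hq1 : 0 < q d (T-1) := q_pos hd0 hd _
      have hdiv1 : 1 ≤ n / q d (T-1) := (Nat.one_le_div_iff hq1).2 hTlow
      have hdiv2 : n / q d (T-1) < d T := by
        rw [Nat.div_lt_iff_lt_mul hq1]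
        calc n < q d T := hTmem
          _ = q d (T-1) * d T := q_pred_mul hd0 hT1
          _ = d T * q d (T-1) := by ring
      rw [Nat.mod_eq_of_lt hdiv2]
      exact hdiv1
    have hone : ‖io d p lam T‖ ^ digit d n T ≤ ‖io d p lam T‖ :=
      pow_le_of_le_one (norm_nonneg _) (hbd T (by omega)) (by omega)
    have hfirst : ∏ j ∈ Ioc K w, ‖io d p lam j‖ ^ digit d n j ≤ 1 := by
      apply Finset.prod_le_one (fun j _ => by positivity)
      intro j hj
      simp only [Finset.mem_Ioc] at hj
      exact pow_le_one₀ (norm_nonneg _) (hbd j (by omega))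
    rw [hw, Finset.prod_Ioc_succ_top (by omega : K ≤ w)]
    rw [hw] at hone
    calc (∏ j ∈ Ioc K w, ‖io d p lam j‖ ^ digit d n j)
          * ‖io d p lam (w+1)‖ ^ digit d n (w+1)
        ≤ 1 * ‖io d p lam (w+1)‖ := mul_le_mul hfirst hone (by positivity) zero_le_one
      _ = ‖io d p lam (w+1)‖ := one_mul _
  have hioT : ‖io d p lam T‖ < ε / B := by
    have := hR1 T (by omega)
    rwa [dist_zero_right] at this
  rw [dist_zero_right, hnorm, hsplit]
  calc (∏ j ∈ Ioc 0 K, ‖io d p lam j‖ ^ digit d n j)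
        * ∏ j ∈ Ioc K T, ‖io d p lam j‖ ^ digit d n j
      ≤ B * ‖io d p lam T‖ := by
        apply mul_le_mul hbound1 hbound2 (Finset.prod_nonneg (fun j _ => by positivity))
          (by linarith)
    _ < B * (ε / B) := by
        apply mul_lt_mul_of_pos_left hioT hBpos
    _ = ε := by field_simp

lemma construct (hd0 : d 0 = 1) (hd : ∀ j, 1 ≤ j → 2 ≤ d j)
    (hp : ∀ j, 1 ≤ j → p j ∈ Set.Ioc (0 : ℝ) 1)
    (htend : Tendsto p atTop (nhds 1)) :
    ∃ lam : ℂ, lam ≠ 1 ∧ Tendsto (vl d p lam) atTop (nhds 0) := by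
  obtain ⟨K0, hK0⟩ := Metric.tendsto_atTop.1 htend (1/16) (by norm_num)
  set K := max K0 1 with hKdef
  have hK1 : 1 ≤ K := le_max_right _ _
  have hPK : ∀ j, K + 1 ≤ j → 15/16 < p j ∧ 1 - p j < 1/16 := by
    intro j hj
    have h1 := hK0 j (by omega)
    rw [Real.dist_eq] at h1
    have h2 := abs_lt.1 h1
    constructor <;> [linarith [h2.1]; linarith [h2.2, h2.1]]
  obtain ⟨lam, hlam⟩ := io_surj hd0 hd hp K 0
  have hlamne : lam ≠ 1 := by
    intro heq
    rw [heq, io_one hd0 hp] at hlam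
    exact one_ne_zero hlam
  have hinv : ∀ m, ‖io d p lam (K + m)‖ ≤ 1/4 := by
    intro m
    induction m with
    | zero => rw [Nat.add_zero, hlam]; norm_num
    | succ m ih =>
        have hPj := hPK (K + m + 1) (by omega)
        have hb := io_succ_norm (d := d) hp lam (K + m)
        have hd2 : 2 ≤ d (K + m) := hd _ (by omega)
        have hpow : ‖io d p lam (K+m)‖ ^ d (K+m) ≤ (1/4 : ℝ)^2 := by
          calc ‖io d p lam (K+m)‖ ^ d (K+m) ≤ ‖io d p lam (K+m)‖ ^ 2 :=
              pow_le_pow_of_le_one (norm_nonneg _) (by linarith) hd2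
            _ ≤ (1/4:ℝ)^2 := pow_le_pow_left₀ (norm_nonneg _) ih 2
        rw [show K + (m+1) = (K + m) + 1 by omega]
        calc ‖io d p lam (K+m+1)‖
            ≤ (‖io d p lam (K+m)‖ ^ d (K+m) + (1 - p (K+m+1))) / p (K+m+1) := hb
          _ ≤ 1/4 := by
              rw [div_le_iff₀ (by linarith [hPj.1])]
              nlinarith [hPj.1, hPj.2]
  have htend0 : Tendsto (fun r => io d p lam r) atTop (nhds 0) := by
    rw [Metric.tendsto_atTop]
    intro ε hε
    set ε' := min (ε/2) (1/4) with hε'def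
    have hε'pos : 0 < ε' := lt_min (by linarith) (by norm_num)
    have hε'le : ε' ≤ 1/4 := min_le_right _ _
    obtain ⟨N1, hN1⟩ := Metric.tendsto_atTop.1 htend (ε'^2/2) (by positivity)
    set R0 := max N1 (K+1) with hR0def
    have hR0K : K + 1 ≤ R0 := le_max_right _ _
    have hclaim : ∀ m, ‖io d p lam (R0 + m)‖ ≤ (1/2)^m * (1/4) + ε'/2 := by
      intro m
      induction m with
      | zero =>
          have he : R0 + 0 = K + (R0 - K) := by omega
          rw [he]
          calc ‖io d p lam (K + (R0 - K))‖ ≤ 1/4 := hinv _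
            _ ≤ (1/2:ℝ)^0 * (1/4) + ε'/2 := by norm_num; linarith
      | succ m ih =>
          have hxnn : (0:ℝ) ≤ ‖io d p lam (R0 + m)‖ := norm_nonneg _
          have ht0 : (0:ℝ) ≤ (1/2)^m := by positivity
          have ht1 : ((1:ℝ)/2)^m ≤ 1 := pow_le_one₀ (by norm_num) (by norm_num)
          have hxhalf : ‖io d p lam (R0 + m)‖ ≤ 1/2 := by nlinarith
          have hb := io_succ_norm (d := d) hp lam (R0 + m)
          have hPj := hPK (R0 + m + 1) (by omega)
          have hdist := hN1 (R0 + m + 1) (by omega)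
          rw [Real.dist_eq] at hdist
          have habs := abs_lt.1 hdist
          have hsmall : 1 - p (R0+m+1) ≤ ε'^2/2 := by linarith [habs.1]
          have hd2 : 2 ≤ d (R0 + m) := hd _ (by omega)
          have hpow : ‖io d p lam (R0+m)‖ ^ d (R0+m) ≤ ‖io d p lam (R0+m)‖^2 :=
            pow_le_pow_of_le_one hxnn (by linarith) hd2
          have e1 : ‖io d p lam (R0+m)‖^2
              ≤ ((1/2)^m)^2/16 + (1/2)^m*ε'/4 + ε'^2/4 := by nlinarith [ih]
          have e2 : ((1/2:ℝ)^m)^2 ≤ (1/2)^m := by nlinarith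
          have e3 : (1/2:ℝ)^m * ε' ≤ ε' := by nlinarith
          have e4 : ε'^2 ≤ ε'/4 := by nlinarith
          rw [show R0 + (m+1) = (R0 + m) + 1 by omega]
          calc ‖io d p lam (R0+m+1)‖
              ≤ (‖io d p lam (R0+m)‖ ^ d (R0+m) + (1 - p (R0+m+1))) / p (R0+m+1) := hb
            _ ≤ (1/2)^(m+1) * (1/4) + ε'/2 := by
                rw [div_le_iff₀ (by linarith [hPj.1]), pow_succ]
                have hrhsnn : (0:ℝ) ≤ (1/2)^m * (1/2) * (1/4) + ε'/2 := by positivity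
                nlinarith [hPj.1, mul_le_mul_of_nonneg_left (le_of_lt hPj.1) hrhsnn]
    obtain ⟨m0, hm0⟩ := exists_pow_lt_of_lt_one (show (0:ℝ) < ε'/2 by linarith)
      (show (1/2:ℝ) < 1 by norm_num)
    refine ⟨R0 + m0, fun r hr => ?_⟩
    obtain ⟨m, rfl, hmm⟩ : ∃ m, r = R0 + m ∧ m0 ≤ m := ⟨r - R0, by omega, by omega⟩
    rw [dist_zero_right]
    have h2 : (1/2:ℝ)^m ≤ (1/2)^m0 := pow_le_pow_of_le_one (by norm_num) (by norm_num) hmm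
    calc ‖io d p lam (R0+m)‖ ≤ (1/2)^m * (1/4) + ε'/2 := hclaim m
      _ < ε := by
          have hle : ε' ≤ ε/2 := min_le_left _ _
          nlinarith [hm0, h2, hε'pos]
  refine ⟨lam, hlamne, vl_tendsto_zero hd0 hd hp lam hK1 ?_ htend0⟩
  intro r hr
  obtain ⟨m, rfl⟩ : ∃ m, r = K + m := ⟨r - K, by omega⟩
  linarith [hinv m]

lemma eig_limit (hd0 : d 0 = 1) (hd : ∀ j, 1 ≤ j → 2 ≤ d j)
    (hp : ∀ j, 1 ≤ j → p j ∈ Set.Ioc (0 : ℝ) 1) (lam l : ℂ) (v : ℕ → ℂ)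
    (heig : ∀ n, ∑' m, (s d p n m : ℂ) * v m = lam * v n)
    (hv : Tendsto v atTop (nhds l)) (hne : lam ≠ 1) : l = 0 := by
  have heq : ∀ k : ℕ, (lam - 1) * v (k * d 1)
      = (p 1 : ℂ) * (v (k * d 1 + 1) - v (k * d 1)) := by
    intro k
    have h := heig (k * d 1)
    rw [s_apply_eig hd0 hd] at h
    rw [zeta_mul_d1 hd0 hd k] at h
    rw [show (1:ℕ) - 1 = 0 from rfl, show Finset.Icc 1 0 = (∅ : Finset ℕ) from rfl,
      Finset.sum_empty, Finset.Icc_self, Finset.prod_singleton] at h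
    linear_combination -h
  have hd1 : 0 < d 1 := by have := hd 1 le_rfl; omega
  have hmono : Tendsto (fun k : ℕ => k * d 1) atTop atTop :=
    tendsto_atTop_mono (fun k => Nat.le_mul_of_pos_right k hd1) tendsto_id
  have hmono2 : Tendsto (fun k : ℕ => k * d 1 + 1) atTop atTop :=
    tendsto_atTop_mono (show ∀ k : ℕ, k ≤ k * d 1 + 1 by
      intro k; have := Nat.le_mul_of_pos_right k hd1; omega) tendsto_id
  have h1 : Tendsto (fun k : ℕ => v (k * d 1)) atTop (nhds l) := hv.comp hmono
  have h2 : Tendsto (fun k : ℕ => v (k * d 1 + 1)) atTop (nhds l) := hv.comp hmono2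
  have hL : Tendsto (fun k : ℕ => (lam - 1) * v (k * d 1)) atTop (nhds ((lam - 1) * l)) :=
    h1.const_mul _
  have hR : Tendsto (fun k : ℕ => (p 1 : ℂ) * (v (k * d 1 + 1) - v (k * d 1))) atTop
      (nhds ((p 1 : ℂ) * (l - l))) := (h2.sub h1).const_mul _
  have hfun : (fun k : ℕ => (lam - 1) * v (k * d 1))
      = fun k : ℕ => (p 1 : ℂ) * (v (k * d 1 + 1) - v (k * d 1)) := funext heq
  have huniq := tendsto_nhds_unique hL (by rw [hfun]; exact hR)
  have hz : (lam - 1) * l = 0 := by rw [huniq]; ring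
  rcases mul_eq_zero.1 hz with h | h
  · exact absurd (sub_eq_zero.1 h) hne
  · exact h

lemma v0_ne (hd0 : d 0 = 1) (hd : ∀ j, 1 ≤ j → 2 ≤ d j)
    (hp : ∀ j, 1 ≤ j → p j ∈ Set.Ioc (0 : ℝ) 1) (lam : ℂ) (v : ℕ → ℂ)
    (hv : ∀ n, lam * v n
      = (1 - (p 1 : ℂ)) * v n + (∏ j ∈ Icc 1 (zeta d n), (p j : ℂ)) * v (n+1)
        + ∑ r ∈ Icc 1 (zeta d n - 1), (1 - (p (r+1) : ℂ)) * (∏ j ∈ Icc 1 r, (p j : ℂ))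
            * v (n - (q d r - 1)))
    (hvne : v ≠ 0) : v 0 ≠ 0 := by
  intro h0
  apply hvne
  have hzero : ∀ n, lam * (fun _ : ℕ => (0:ℂ)) n
      = (1 - (p 1 : ℂ)) * (fun _ : ℕ => (0:ℂ)) n
        + (∏ j ∈ Icc 1 (zeta d n), (p j : ℂ)) * (fun _ : ℕ => (0:ℂ)) (n+1)
        + ∑ r ∈ Icc 1 (zeta d n - 1), (1 - (p (r+1) : ℂ)) * (∏ j ∈ Icc 1 r, (p j : ℂ))
            * (fun _ : ℕ => (0:ℂ)) (n - (q d r - 1)) := by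
    intro n; simp
  have huniq := eig_unique hd0 hd hp lam v (fun _ => 0) hv hzero h0
  funext n
  exact huniq n

end Aux2
end

/-- `σ_p(S on c) = σ_p(S on c₀) ∪ {1}` (in eigenvector form), and
`σ_p(S on c) = {1}` iff `(p_n)` does not converge to `1`. -/
theorem stmt15 (d : ℕ → ℕ) (p : ℕ → ℝ)
    (hd0 : d 0 = 1) (hd : ∀ j, 1 ≤ j → 2 ≤ d j)
    (hp : ∀ j, 1 ≤ j → p j ∈ Set.Ioc (0 : ℝ) 1) :
    {lam : ℂ | ∃ v : ℕ → ℂ, (∃ l : ℂ, Filter.Tendsto v Filter.atTop (nhds l)) ∧ v ≠ 0 ∧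
        ∀ n, ∑' m : ℕ, (s d p n m : ℂ) * v m = lam * v n} =
      {lam : ℂ | ∃ v : ℕ → ℂ, Filter.Tendsto v Filter.atTop (nhds (0 : ℂ)) ∧ v ≠ 0 ∧
        ∀ n, ∑' m : ℕ, (s d p n m : ℂ) * v m = lam * v n} ∪ {1} ∧
      ({lam : ℂ | ∃ v : ℕ → ℂ, (∃ l : ℂ, Filter.Tendsto v Filter.atTop (nhds l)) ∧ v ≠ 0 ∧
        ∀ n, ∑' m : ℕ, (s d p n m : ℂ) * v m = lam * v n} = {1} ↔
        ¬ Filter.Tendsto (fun n => p n) Filter.atTop (nhds (1 : ℝ))) := by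
  have hone : ∀ n : ℕ, ∑' m : ℕ, (s d p n m : ℂ) * (fun _ : ℕ => (1:ℂ)) m
      = 1 * (fun _ : ℕ => (1:ℂ)) n := by
    intro n
    simp only []
    rw [s_apply_eig hd0 hd]
    simp only [mul_one, one_mul]
    exact sum_row_one hd0 hd hp n
  have honemem : (1:ℂ) ∈ {lam : ℂ | ∃ v : ℕ → ℂ,
      (∃ l : ℂ, Filter.Tendsto v Filter.atTop (nhds l)) ∧ v ≠ 0 ∧
      ∀ n, ∑' m : ℕ, (s d p n m : ℂ) * v m = lam * v n} :=
    ⟨fun _ => 1, ⟨1, tendsto_const_nhds⟩, fun h => by simpa using congrFun h 0, hone⟩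
  constructor
  · ext lam
    simp only [Set.mem_union, Set.mem_setOf_eq, Set.mem_singleton_iff]
    constructor
    · rintro ⟨v, ⟨l, hv⟩, hvne, heig⟩
      by_cases hl1 : lam = 1
      · exact Or.inr hl1
      · refine Or.inl ⟨v, ?_, hvne, heig⟩
        have hl0 : l = 0 := eig_limit hd0 hd hp lam l v heig hv hl1
        rwa [hl0] at hv
    · rintro (⟨v, hv, hvne, heig⟩ | h1)
      · exact ⟨v, ⟨0, hv⟩, hvne, heig⟩
      · subst h1
        exact ⟨fun _ => 1, ⟨1, tendsto_const_nhds⟩, fun h => by simpa using congrFun h 0, hone⟩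
  · constructor
    · intro hAeq htend
      obtain ⟨lam, hlamne, hvl0⟩ := construct hd0 hd hp htend
      have hmem : lam ∈ {lam : ℂ | ∃ v : ℕ → ℂ,
          (∃ l : ℂ, Filter.Tendsto v Filter.atTop (nhds l)) ∧ v ≠ 0 ∧
          ∀ n, ∑' m : ℕ, (s d p n m : ℂ) * v m = lam * v n} := by
        refine ⟨vl d p lam, ⟨0, hvl0⟩, ?_, ?_⟩
        · intro h
          have h0 := congrFun h 0
          rw [vl_zero'] at h0
          simpa using h0
        · intro n
          rw [s_apply_eig hd0 hd]
          exact (vl_eig hd0 hd hp lam n).symm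
      rw [hAeq] at hmem
      exact hlamne hmem
    · intro hnt
      apply Set.eq_singleton_iff_unique_mem.2
      refine ⟨honemem, ?_⟩
      rintro lam ⟨v, ⟨l, hv⟩, hvne, heig⟩
      by_contra hl1
      have hl0 : l = 0 := eig_limit hd0 hd hp lam l v heig hv hl1
      rw [hl0] at hv
      have hRHS : ∀ n, lam * v n
          = (1 - (p 1 : ℂ)) * v n + (∏ j ∈ Icc 1 (zeta d n), (p j : ℂ)) * v (n+1)
            + ∑ r ∈ Icc 1 (zeta d n - 1), (1 - (p (r+1) : ℂ)) * (∏ j ∈ Icc 1 r, (p j : ℂ))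
                * v (n - (q d r - 1)) :=
        fun n => (heig n).symm.trans (s_apply_eig hd0 hd v n)
      have hv0ne : v 0 ≠ 0 := v0_ne hd0 hd hp lam v hRHS hvne
      have hw := eig_scal lam (v 0) (vl d p lam) (fun n => vl_eig hd0 hd hp lam n)
      have huniq : ∀ n, v n = v 0 * vl d p lam n :=
        eig_unique hd0 hd hp lam v (fun n => v 0 * vl d p lam n) hRHS hw
          (by show v 0 = v 0 * vl d p lam 0; rw [vl_zero', mul_one])
      have hqt : Tendsto (fun r => q d r) atTop atTop :=
        tendsto_atTop_mono (fun r => le_of_lt (lt_q hd0 hd r)) tendsto_id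
      have h1 : Tendsto (fun r : ℕ => v (q d r)) atTop (nhds 0) := hv.comp hqt
      have hfun : (fun r : ℕ => io d p lam (r+1)) = fun r : ℕ => (v 0)⁻¹ * v (q d r) := by
        funext r
        rw [huniq (q d r), vl_q hd0 hd lam r]
        field_simp
      have h2 : Tendsto (fun r : ℕ => io d p lam (r+1)) atTop (nhds 0) := by
        rw [hfun]
        simpa using h1.const_mul ((v 0)⁻¹)
      have h3 : Tendsto (fun r => io d p lam r) atTop (nhds 0) :=
        (tendsto_add_atTop_iff_nat 1).1 h2
      exact io_not_tendsto_zero hd0 hd hp hnt lam h3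

end AMFC
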